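/- Let e, d, m0 be integers with e ≥ 1, d ≥ 2e, and m0 ≥ 2e − 2. If e(d − m0 − 8) + m0 + 2 = 0 and (d−2e)(d−2e+3)/2 − (m0−2e+2)(m0−2e+3)/2 − 6e ≥ 0, then either (d = 2e+4, m0 = 2e−2, and e ≤ 2), or (d = 3e+3, m0 = 3e−2, and e ≤ 4), or (d = 4e+2 and m0 = 4e−2), or (d = 5e+1 and m0 = 5e−2). -/
import Mathlib


/-- Case analysis: `A = L(e, e-1, 2e, 1)` splits off twice from `L(d, m0, 2e, 4)`.
If `M·A = 0` and `v(M) ≥ 0` then one of four families occurs. -/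
theorem split_twice (e d m0 : ℤ) (he : 1 ≤ e) (hd : 2 * e ≤ d) (hm : 2 * e - 2 ≤ m0)
    (hMA : e * (d - m0 - 8) + m0 + 2 = 0)
    (hvM : 0 ≤ (d - 2 * e) * (d - 2 * e + 3) / 2 - (m0 - 2 * e + 2) * (m0 - 2 * e + 3) / 2
        - 6 * e) :
    (d = 2 * e + 4 ∧ m0 = 2 * e - 2 ∧ e ≤ 2) ∨
    (d = 3 * e + 3 ∧ m0 = 3 * e - 2 ∧ e ≤ 4) ∨
    (d = 4 * e + 2 ∧ m0 = 4 * e - 2) ∨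
    (d = 5 * e + 1 ∧ m0 = 5 * e - 2) := by
  obtain ⟨k, rfl⟩ : ∃ k, d = m0 + k := ⟨d - m0, by ring⟩
  have hm0 : m0 = 8 * e - e * k - 2 := by linear_combination hMA
  have h1 : ∃ x, (m0 + k - 2 * e) * (m0 + k - 2 * e + 3) = 2 * x := by
    rcases Int.even_or_odd (m0 + k - 2 * e) with ⟨c, hc⟩ | ⟨c, hc⟩
    · exact ⟨c * (m0 + k - 2 * e + 3), by rw [hc]; ring⟩
    · exact ⟨(m0 + k - 2 * e) * (c + 2), by rw [hc]; ring⟩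
  have h2 : ∃ y, (m0 - 2 * e + 2) * (m0 - 2 * e + 3) = 2 * y := by
    rcases Int.even_or_odd (m0 - 2 * e + 2) with ⟨c, hc⟩ | ⟨c, hc⟩
    · exact ⟨c * (2 * c + 1), by linear_combination (m0 - 2 * e + 3 + 2 * c) * hc⟩
    · exact ⟨(2 * c + 1) * (c + 1), by linear_combination (m0 - 2 * e + 4 + 2 * c) * hc⟩
  obtain ⟨x, hx⟩ := h1
  obtain ⟨y, hy⟩ := h2
  rw [hx, hy, Int.mul_ediv_cancel_left _ (by norm_num : (2:ℤ) ≠ 0),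
    Int.mul_ediv_cancel_left _ (by norm_num : (2:ℤ) ≠ 0)] at hvM
  -- 2*(x - y) = (k-2)*(2*e*(6-k)+k+1)
  have hxy : 2 * x - 2 * y = 2 * (e * (6 - k)) * (k - 1) + (k - 2) * (k + 1) := by
    rw [← hx, ← hy, hm0]; ring
  have hk6 : k ≤ 6 := by nlinarith [hm, hm0, he]
  have hk3 : 3 ≤ k := by
    by_contra h
    push_neg at h
    have h1 : 0 ≤ (3 - k) * (4 - k) := by nlinarith
    have h2 : 0 ≤ (e - 1) * ((3 - k) * (4 - k)) := mul_nonneg (by linarith) h1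
    have h3 : 0 ≤ (2 - k) * (11 - k) := by nlinarith
    nlinarith [hvM, hxy, h1, h2, h3]
  subst hm0
  interval_cases k
  · exact Or.inr (Or.inr (Or.inr ⟨by ring, by ring⟩))
  · exact Or.inr (Or.inr (Or.inl ⟨by ring, by ring⟩))
  · exact Or.inr (Or.inl ⟨by ring, by ring, by nlinarith [hvM, hxy]⟩)
  · exact Or.inl ⟨by ring, by ring, by nlinarith [hvM, hxy]⟩
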